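/- Let k ≥ 1, and consider the system ∂_m Ψ = Ψ B_m for m ranging over a finite index set, where the entries of the matrices B_m are polynomials in variables w^{k+1},…,w^l, each assigned a positive rational weight (deg w^j > 0), and each entry of B_m is weighted homogeneous of the appropriate degree. If the system is compatible (∂_m(Ψ B_n) = ∂_n(Ψ B_m)), then there exists a unique solution Ψ analytic at w = 0 with Ψ|_{w=0} = Id, and the entries of Ψ are weighted homogeneous polynomials in w^{k+1},…,w^l. -/

import Mathlib

open MvPolynomial Finsupp

namespace Stmt17

variable {d n : ℕ}

abbrev Poly (d : ℕ) := MvPolynomial (Fin d) ℂ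
abbrev Mat (d n : ℕ) := Matrix (Fin n) (Fin n) (Poly d)


lemma weight_single (c : Fin d → ℚ) (m : Fin d) :
    Finsupp.weight c (Finsupp.single m 1) = c m := by
  rw [Finsupp.weight_apply, Finsupp.sum_single_index] <;> simp

lemma degree_add' (a b : Fin d →₀ ℕ) : (a + b).degree = a.degree + b.degree := by
  simp only [Finsupp.degree_eq_weight_one, map_add]

/-- weighted Euler on a monomial -/
lemma wEuler_monomial (c : Fin d → ℚ) (a : Fin d →₀ ℕ) (x : ℂ) :
    ∑ m : Fin d, (c m : ℂ) • (X m * pderiv m (monomial a x)) =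
      ((Finsupp.weight c a : ℚ) : ℂ) • monomial a x := by
  have key : ∀ m : Fin d, X m * pderiv m (monomial a x) = (a m) • monomial a x := by
    intro m
    rw [pderiv_monomial]
    rcases Nat.eq_zero_or_pos (a m) with h | h
    · simp [h]
    · have hle : Finsupp.single m 1 ≤ a := by
        rwa [Finsupp.single_le_iff]
      rw [X, monomial_mul, one_mul, add_tsub_cancel_of_le hle]
      rw [smul_monomial]
      congr 1
      rw [nsmul_eq_mul, mul_comm]
  simp only [key]
  have : ∀ m : Fin d, (c m : ℂ) • ((a m) • monomial a x)
      = (((a m • c m : ℚ)) : ℂ) • monomial a x := by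
    intro m
    rw [← Nat.cast_smul_eq_nsmul ℂ, smul_smul]
    congr 1
    norm_cast
    rw [nsmul_eq_mul]
    ring
  simp only [this]
  rw [← Finset.sum_smul]
  congr 1
  rw [Finsupp.weight_apply, Finsupp.sum]
  push_cast
  rw [Finset.sum_subset (Finset.subset_univ a.support)]
  intro x_1 _ hx
  simp only [Finsupp.notMem_support_iff] at hx
  simp [hx]

lemma wEuler_eq_sum (c : Fin d → ℚ) (p : MvPolynomial (Fin d) ℂ) :
    (∑ m : Fin d, (c m : ℂ) • (X m * pderiv m p)) =
      ∑ a ∈ p.support, ((Finsupp.weight c a : ℚ) : ℂ) • monomial a (coeff a p) := by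
  conv_lhs => rw [p.as_sum]
  simp only [map_sum, Finset.mul_sum, Finset.smul_sum]
  rw [Finset.sum_comm]
  exact Finset.sum_congr rfl fun a _ => wEuler_monomial c a (coeff a p)

lemma coeff_wEuler (c : Fin d → ℚ) (p : MvPolynomial (Fin d) ℂ) (b : Fin d →₀ ℕ) :
    coeff b (∑ m : Fin d, (c m : ℂ) • (X m * pderiv m p)) =
      ((Finsupp.weight c b : ℚ) : ℂ) * coeff b p := by
  rw [wEuler_eq_sum]
  rw [coeff_sum]
  simp only [coeff_smul, coeff_monomial, smul_eq_mul, mul_ite, mul_zero]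
  rw [Finset.sum_ite_eq' p.support b]
  by_cases hb : b ∈ p.support
  · simp [hb]
  · rw [MvPolynomial.notMem_support_iff] at hb
    simp [hb]



lemma isWeightedHomogeneous_iff_wEuler (c : Fin d → ℚ) (δ : ℚ) (p : MvPolynomial (Fin d) ℂ) :
    IsWeightedHomogeneous c p δ ↔
      ∑ m : Fin d, (c m : ℂ) • (X m * pderiv m p) = ((δ : ℚ) : ℂ) • p := by
  constructor
  · intro h
    ext b
    rw [coeff_wEuler, coeff_smul]
    rcases eq_or_ne (coeff b p) 0 with h0 | h0
    · simp [h0]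
    · rw [h h0]; rfl
  · intro h b hb
    have := congrArg (coeff b) h
    rw [coeff_wEuler, coeff_smul, smul_eq_mul] at this
    have h2 : ((Finsupp.weight c b : ℚ) : ℂ) = ((δ : ℚ) : ℂ) :=
      mul_right_cancel₀ hb this
    exact_mod_cast h2

lemma weight_one_rat (b : Fin d →₀ ℕ) :
    Finsupp.weight (fun _ : Fin d => (1 : ℚ)) b = (b.degree : ℚ) := by
  rw [Finsupp.weight_apply, Finsupp.sum, Finsupp.degree_apply]
  push_cast
  exact Finset.sum_congr rfl fun i _ => by simp

lemma isHomogeneous_toRat {p : MvPolynomial (Fin d) ℂ} {r : ℕ} (hp : p.IsHomogeneous r) :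
    IsWeightedHomogeneous (fun _ : Fin d => (1 : ℚ)) p (r : ℚ) := by
  intro b hb
  rw [weight_one_rat]
  have := hp hb
  change Finsupp.weight (fun _ : Fin d => (1 : ℕ)) b = r at this
  rw [← Finsupp.degree_eq_weight_one] at this
  exact_mod_cast this

lemma euler {p : MvPolynomial (Fin d) ℂ} {r : ℕ} (hp : p.IsHomogeneous r) :
    ∑ m : Fin d, X m * pderiv m p = (r : ℂ) • p := by
  have := (isWeightedHomogeneous_iff_wEuler (fun _ => (1 : ℚ)) (r : ℚ) p).1 (isHomogeneous_toRat hp)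
  simpa using this

lemma HC_monomial (t : ℕ) (a : Fin d →₀ ℕ) (x : ℂ) :
    homogeneousComponent t (monomial a x) = if a.degree = t then monomial a x else 0 := by
  rw [homogeneousComponent_of_mem ((mem_homogeneousSubmodule _ _).2 (isHomogeneous_monomial x rfl))]
  by_cases h : a.degree = t
  · rw [if_pos h, if_pos h.symm]
  · rw [if_neg h, if_neg (fun hh => h hh.symm)]

lemma HC_of_isHomogeneous {p : MvPolynomial (Fin d) ℂ} {r : ℕ} (hp : p.IsHomogeneous r) :
    homogeneousComponent r p = p := by
  rw [homogeneousComponent_of_mem ((mem_homogeneousSubmodule _ _).2 hp), if_pos rfl]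

lemma HC_ne_of_isHomogeneous {p : MvPolynomial (Fin d) ℂ} {r t : ℕ} (hp : p.IsHomogeneous r)
    (h : r ≠ t) : homogeneousComponent t p = 0 := by
  rw [homogeneousComponent_of_mem ((mem_homogeneousSubmodule _ _).2 hp), if_neg (fun hh => h hh.symm)]

lemma degree_single1 (m : Fin d) : (Finsupp.single m 1).degree = 1 := by
  rw [Finsupp.degree_apply, Finsupp.support_single_ne_zero _ one_ne_zero]
  simp

lemma HC_mul (t : ℕ) (p q : MvPolynomial (Fin d) ℂ) :
    homogeneousComponent t (p * q) =
      ∑ i ∈ Finset.range (t + 1),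
        homogeneousComponent i p * homogeneousComponent (t - i) q := by
  have mono : ∀ (a b : Fin d →₀ ℕ) (x y : ℂ),
      homogeneousComponent t (monomial a x * monomial b y) =
        ∑ i ∈ Finset.range (t + 1),
          homogeneousComponent i (monomial a x) * homogeneousComponent (t - i) (monomial b y) := by
    intro a b x y
    rw [monomial_mul, HC_monomial]
    simp only [HC_monomial]
    by_cases hd : a.degree ≤ t
    · rw [Finset.sum_eq_single a.degree]
      · rw [if_pos rfl]
        by_cases hb : b.degree = t - a.degree
        · rw [if_pos hb, if_pos (by rw [degree_add']; omega), monomial_mul]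
        · rw [if_neg hb, if_neg (by rw [degree_add']; omega), mul_zero]
      · intro i _ hne
        rw [if_neg (fun h => hne h.symm), zero_mul]
      · intro h
        exact absurd (Finset.mem_range.2 (by omega)) h
    · rw [if_neg (by rw [degree_add']; omega), Finset.sum_eq_zero]
      intro i hi
      rw [Finset.mem_range] at hi
      rw [if_neg (by omega), zero_mul]
  conv_lhs => rw [p.as_sum, q.as_sum, Finset.sum_mul_sum]
  rw [map_sum]
  simp only [map_sum]
  conv_rhs => rw [p.as_sum, q.as_sum]
  simp only [map_sum, Finset.sum_mul, Finset.mul_sum]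
  conv_lhs => rw [Finset.sum_comm]
  conv_rhs => rw [Finset.sum_comm]
  refine Finset.sum_congr rfl fun b _ => ?_
  conv_rhs => rw [Finset.sum_comm]
  exact Finset.sum_congr rfl fun a _ => mono a b _ _

lemma pderiv_HC_succ (m : Fin d) (t : ℕ) (p : MvPolynomial (Fin d) ℂ) :
    pderiv m (homogeneousComponent (t + 1) p) = homogeneousComponent t (pderiv m p) := by
  conv_lhs => rw [p.as_sum]
  conv_rhs => rw [p.as_sum]
  simp only [map_sum]
  refine Finset.sum_congr rfl fun a _ => ?_
  rw [HC_monomial, pderiv_monomial, HC_monomial]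
  by_cases ham : a m = 0
  · simp [apply_ite (pderiv m), pderiv_monomial, ham]
  · have hle : Finsupp.single m 1 ≤ a := by rwa [Finsupp.single_le_iff, Nat.one_le_iff_ne_zero]
    have hdeg : a.degree = (a - Finsupp.single m 1).degree + 1 := by
      conv_lhs => rw [← tsub_add_cancel_of_le hle]
      rw [degree_add', degree_single1]
    by_cases h : a.degree = t + 1
    · rw [if_pos h, if_pos (by omega), pderiv_monomial]
    · rw [if_neg h, if_neg (by omega), map_zero]

lemma pderiv_HC_zero (m : Fin d) (p : MvPolynomial (Fin d) ℂ) :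
    pderiv m (homogeneousComponent 0 p) = 0 := by
  rw [homogeneousComponent_zero]; exact pderiv_C

lemma pderiv_comm' (m m' : Fin d) (p : MvPolynomial (Fin d) ℂ) :
    pderiv m (pderiv m' p) = pderiv m' (pderiv m p) := by
  rcases eq_or_ne m m' with rfl | hne
  · rfl
  · conv_lhs => rw [p.as_sum]
    conv_rhs => rw [p.as_sum]
    simp only [map_sum]
    refine Finset.sum_congr rfl fun a _ => ?_
    simp only [pderiv_monomial]
    rw [Finsupp.tsub_apply, Finsupp.tsub_apply, Finsupp.single_apply, Finsupp.single_apply,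
      if_neg hne, if_neg (fun h => hne h.symm)]
    rw [tsub_right_comm]
    congr 1
    simp only [Nat.sub_zero]
    push_cast
    ring

lemma HC_isWeightedHomogeneous {c : Fin d → ℚ} {δ : ℚ} {p : MvPolynomial (Fin d) ℂ}
    (h : IsWeightedHomogeneous c p δ) (t : ℕ) :
    IsWeightedHomogeneous c (homogeneousComponent t p) δ := by
  intro b hb
  rw [coeff_homogeneousComponent] at hb
  split at hb
  · exact h hb
  · exact absurd rfl hb

lemma pderiv_isHomogeneous {p : MvPolynomial (Fin d) ℂ} {r : ℕ} (hp : p.IsHomogeneous (r + 1))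
    (m : Fin d) : (pderiv m p).IsHomogeneous r := by
  rw [← HC_of_isHomogeneous hp, pderiv_HC_succ]
  exact homogeneousComponent_isHomogeneous _ _

lemma vanish {c : Fin d → ℚ} (cmin : ℚ) (hcm : ∀ m, cmin ≤ c m) {p : MvPolynomial (Fin d) ℂ}
    {r : ℕ} {δ : ℚ} (hp : p.IsHomogeneous r) (hw : IsWeightedHomogeneous c p δ)
    (hlt : δ < r * cmin) : p = 0 := by
  by_contra hp0
  obtain ⟨b, hb⟩ := Finset.nonempty_iff_ne_empty.2 (fun h => hp0 (MvPolynomial.support_eq_empty.1 h))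
  have hbc : coeff b p ≠ 0 := MvPolynomial.mem_support_iff.1 hb
  have hdeg : b.degree = r := by
    have := hp hbc
    change Finsupp.weight (fun _ : Fin d => (1 : ℕ)) b = r at this
    rwa [← Finsupp.degree_eq_weight_one] at this
  have hwt : Finsupp.weight c b = δ := hw hbc
  have hge : (r : ℚ) * cmin ≤ δ := by
    rw [← hwt, ← hdeg, Finsupp.weight_apply, Finsupp.sum, Finsupp.degree_apply]
    push_cast
    rw [Finset.sum_mul]
    refine Finset.sum_le_sum fun i _ => ?_
    rw [nsmul_eq_mul]
    exact mul_le_mul_of_nonneg_left (hcm i) (Nat.cast_nonneg _)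
  linarith



/-- entrywise partial derivative -/
noncomputable def Dm (m : Fin d) (M : Mat d n) : Mat d n :=
  Matrix.of fun s j => pderiv m (M s j)

/-- entrywise homogeneous component -/
noncomputable def HCm (t : ℕ) (M : Mat d n) : Mat d n :=
  Matrix.of fun s j => homogeneousComponent t (M s j)

@[simp] lemma Dm_apply (m : Fin d) (M : Mat d n) (s j : Fin n) :
    Dm m M s j = pderiv m (M s j) := rfl

@[simp] lemma HCm_apply (t : ℕ) (M : Mat d n) (s j : Fin n) :
    HCm t M s j = homogeneousComponent t (M s j) := rfl

lemma Dm_add (m : Fin d) (A B : Mat d n) : Dm m (A + B) = Dm m A + Dm m B := by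
  ext s j; simp [Dm]

lemma Dm_sub (m : Fin d) (A B : Mat d n) : Dm m (A - B) = Dm m A - Dm m B := by
  ext s j; simp [Dm]

lemma Dm_zero (m : Fin d) : Dm m (0 : Mat d n) = 0 := by
  ext s j; simp [Dm]

lemma Dm_sum (m : Fin d) {ι : Type*} (s : Finset ι) (f : ι → Mat d n) :
    Dm m (∑ i ∈ s, f i) = ∑ i ∈ s, Dm m (f i) := by
  ext a b; simp [Dm, Matrix.sum_apply]

lemma Dm_mul (m : Fin d) (A B : Mat d n) :
    Dm m (A * B) = Dm m A * B + A * Dm m B := by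
  ext s j
  simp only [Dm_apply, Matrix.mul_apply, Matrix.add_apply, map_sum, pderiv_mul]
  rw [← Finset.sum_add_distrib]

lemma Dm_csmul (m : Fin d) (z : ℂ) (A : Mat d n) : Dm m (z • A) = z • Dm m A := by
  refine Matrix.ext fun s j => ?_
  simp only [Dm_apply, Matrix.smul_apply]
  exact (pderiv m).map_smul z (A s j)

lemma Dm_Xsmul (m m' : Fin d) (A : Mat d n) :
    Dm m ((X m' : Poly d) • A) = (pderiv m (X m' : Poly d)) • A + (X m' : Poly d) • Dm m A := by
  ext s j
  simp only [Dm_apply, Matrix.add_apply, Matrix.smul_apply, smul_eq_mul, pderiv_mul]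

lemma Dm_one (m : Fin d) : Dm m (1 : Mat d n) = 0 := by
  ext s j
  simp only [Dm_apply, Matrix.zero_apply, Matrix.one_apply]
  split <;> simp

lemma Dm_comm (m m' : Fin d) (A : Mat d n) : Dm m (Dm m' A) = Dm m' (Dm m A) := by
  refine Matrix.ext fun s j => ?_
  exact pderiv_comm' m m' (A s j)

lemma HCm_add (t : ℕ) (A B : Mat d n) : HCm t (A + B) = HCm t A + HCm t B := by
  ext s j; simp [HCm]

lemma HCm_sub (t : ℕ) (A B : Mat d n) : HCm t (A - B) = HCm t A - HCm t B := by
  ext s j; simp [HCm]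

lemma HCm_mul (t : ℕ) (A B : Mat d n) :
    HCm t (A * B) = ∑ i ∈ Finset.range (t + 1), HCm i A * HCm (t - i) B := by
  ext s j
  simp only [HCm_apply, Matrix.mul_apply, Matrix.sum_apply, map_sum, HC_mul]
  rw [Finset.sum_comm]

lemma Dm_HCm_succ (m : Fin d) (t : ℕ) (A : Mat d n) :
    Dm m (HCm (t + 1) A) = HCm t (Dm m A) := by
  refine Matrix.ext fun s j => ?_
  exact pderiv_HC_succ m t (A s j)

lemma Dm_HCm_zero (m : Fin d) (A : Mat d n) : Dm m (HCm 0 A) = 0 := by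
  refine Matrix.ext fun s j => ?_
  exact pderiv_HC_zero m (A s j)

/-- entrywise homogeneity -/
def MHom (r : ℕ) (M : Mat d n) : Prop := ∀ s j, (M s j).IsHomogeneous r

lemma MHom_one : MHom 0 (1 : Mat d n) := by
  intro s j
  rw [Matrix.one_apply]
  split
  · exact isHomogeneous_one _ _
  · exact isHomogeneous_zero _ _ _

lemma MHom_zero (r : ℕ) : MHom r (0 : Mat d n) := fun s j => isHomogeneous_zero _ _ _

lemma MHom.mul {r t : ℕ} {A B : Mat d n} (hA : MHom r A) (hB : MHom t B) :
    MHom (r + t) (A * B) := fun s j =>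
  IsHomogeneous.sum _ _ _ fun i _ => (hA s i).mul (hB i j)

lemma MHom.add {r : ℕ} {A B : Mat d n} (hA : MHom r A) (hB : MHom r B) :
    MHom r (A + B) := fun s j => (hA s j).add (hB s j)

lemma MHom.sub {r : ℕ} {A B : Mat d n} (hA : MHom r A) (hB : MHom r B) :
    MHom r (A - B) := fun s j => (hA s j).sub (hB s j)

lemma MHom.sum {r : ℕ} {ι : Type*} {s : Finset ι} {f : ι → Mat d n}
    (h : ∀ i ∈ s, MHom r (f i)) : MHom r (∑ i ∈ s, f i) := fun a b => by
  rw [Matrix.sum_apply]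
  exact IsHomogeneous.sum _ _ _ fun i hi => h i hi a b

lemma MHom.csmul {r : ℕ} {A : Mat d n} (z : ℂ) (hA : MHom r A) : MHom r (z • A) := by
  intro s j
  rw [Matrix.smul_apply]
  have := (hA s j).C_mul z
  rwa [C_mul'] at this

lemma MHom.Xsmul {r : ℕ} {A : Mat d n} (m : Fin d) (hA : MHom r A) :
    MHom (r + 1) ((X m : Poly d) • A) := by
  intro s j
  rw [Matrix.smul_apply, smul_eq_mul]
  have := (isHomogeneous_X ℂ m).mul (hA s j)
  rwa [add_comm] at this

lemma MHom.Dm {r : ℕ} {A : Mat d n} (h : MHom (r + 1) A) (m : Fin d) :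
    MHom r (Stmt17.Dm m A) := fun s j => pderiv_isHomogeneous (h s j) m

lemma MHom.HCm (r : ℕ) (A : Mat d n) : MHom r (Stmt17.HCm r A) := fun s j =>
  homogeneousComponent_isHomogeneous r (A s j)

lemma HCm_of_MHom {r : ℕ} {A : Mat d n} (h : MHom r A) : HCm r A = A := by
  refine Matrix.ext fun s j => ?_
  exact HC_of_isHomogeneous (h s j)

/-- matrix Euler identity -/
lemma meuler {r : ℕ} {M : Mat d n} (h : MHom r M) :
    ∑ m : Fin d, (X m : Poly d) • Dm m M = (r : ℂ) • M := by
  refine Matrix.ext fun s j => ?_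
  rw [Matrix.sum_apply, Matrix.smul_apply]
  have := euler (h s j)
  simp only [Matrix.smul_apply, smul_eq_mul, Dm_apply]
  exact this



/-- triangular reindexing -/
lemma tri {M : Type*} [AddCommMonoid M] (f : ℕ → ℕ → M) (r : ℕ) :
    ∑ p ∈ Finset.range r, ∑ a ∈ Finset.range (p + 1), f a (p - a)
      = ∑ a ∈ Finset.range r, ∑ b ∈ Finset.range (r - a), f a b := by
  induction r with
  | zero => simp
  | succ r ih =>
    rw [Finset.sum_range_succ, ih]
    have h1 : ∀ a ∈ Finset.range r, ∑ b ∈ Finset.range (r + 1 - a), f a b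
        = (∑ b ∈ Finset.range (r - a), f a b) + f a (r - a) := by
      intro a ha
      rw [Finset.mem_range] at ha
      rw [show r + 1 - a = (r - a) + 1 by omega, Finset.sum_range_succ]
    conv_rhs => rw [Finset.sum_range_succ]
    rw [Finset.sum_congr rfl h1, Finset.sum_add_distrib]
    have h2 : ∑ b ∈ Finset.range (r + 1 - r), f r b = f r 0 := by
      rw [show r + 1 - r = 1 by omega, Finset.sum_range_one]
    rw [h2, add_assoc]
    congr 1
    rw [Finset.sum_range_succ, Nat.sub_self]

variable (B : Fin d → Mat d n)

/-- the recursively constructed homogeneous layers of `Ψ` -/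
noncomputable def Phi : ℕ → Mat d n
  | 0 => 1
  | (r + 1) => (((r : ℂ) + 1)⁻¹) • ∑ m : Fin d, (X m : Poly d) •
      ∑ p ∈ (Finset.range (r + 1)).attach, Phi p.1 * HCm (r - p.1) (B m)
  termination_by r => r
  decreasing_by
    have := p.2
    rw [Finset.mem_range] at this
    omega

/-- degree-`r` layer of `Ψ * B m` -/
noncomputable def G (m : Fin d) (r : ℕ) : Mat d n :=
  ∑ p ∈ Finset.range (r + 1), Phi B p * HCm (r - p) (B m)

lemma Phi_zero : Phi B 0 = 1 := by rw [Phi]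

lemma Phi_succ (r : ℕ) :
    Phi B (r + 1) = (((r : ℂ) + 1)⁻¹) • ∑ m : Fin d, (X m : Poly d) • G B m r := by
  rw [Phi]
  refine congrArg (((r : ℂ) + 1)⁻¹ • ·) ?_
  refine Finset.sum_congr rfl fun m _ => ?_
  refine congrArg ((X m : Poly d) • ·) ?_
  rw [G, ← Finset.sum_attach (Finset.range (r + 1)) (fun p => Phi B p * HCm (r - p) (B m))]

lemma MHom_G_of (r : ℕ) (m : Fin d) (hIH : ∀ p, p ≤ r → MHom p (Phi B p)) :
    MHom r (G B m r) := by
  refine MHom.sum fun p hp => ?_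
  rw [Finset.mem_range] at hp
  have h := (hIH p (by omega)).mul (MHom.HCm (r - p) (B m))
  rwa [show p + (r - p) = r by omega] at h

lemma MHom_Phi : ∀ r, MHom r (Phi B r) := by
  intro r
  induction r using Nat.strong_induction_on with
  | _ r IH =>
    match r with
    | 0 => rw [Phi_zero]; exact MHom_one
    | (r + 1) =>
      rw [Phi_succ]
      exact MHom.csmul _ (MHom.sum fun m _ =>
        MHom.Xsmul m (MHom_G_of B r m fun p hp => IH p (by omega)))


section WH
variable (c : Fin d → ℚ) (ε : Fin n → ℚ)

/-- shifted weighted homogeneity for matrices -/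
def WH (κ : ℚ) (M : Mat d n) : Prop :=
  ∀ s j, IsWeightedHomogeneous c (M s j) (ε j - ε s + κ)

variable {c ε}

lemma WH_one : WH c ε 0 (1 : Mat d n) := by
  intro s j
  rw [Matrix.one_apply]
  split
  · rename_i h
    subst h
    rw [show ε s - ε s + 0 = 0 by ring]
    exact isWeightedHomogeneous_one ℂ c
  · intro b hb
    rw [coeff_zero] at hb
    exact absurd rfl hb

lemma WH.sum {κ : ℚ} {ι : Type*} {s : Finset ι} {f : ι → Mat d n}
    (h : ∀ i ∈ s, WH c ε κ (f i)) : WH c ε κ (∑ i ∈ s, f i) := by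
  intro a b
  rw [Matrix.sum_apply]
  rw [← mem_weightedHomogeneousSubmodule ℂ]
  exact Submodule.sum_mem _ fun i hi =>
    (mem_weightedHomogeneousSubmodule ℂ c _ _).2 (h i hi a b)

lemma WH.csmul {κ : ℚ} {A : Mat d n} (z : ℂ) (h : WH c ε κ A) : WH c ε κ (z • A) := by
  intro s j
  rw [Matrix.smul_apply, ← mem_weightedHomogeneousSubmodule ℂ]
  exact Submodule.smul_mem _ _ ((mem_weightedHomogeneousSubmodule ℂ c _ _).2 (h s j))

lemma WH.mul {κ κ' : ℚ} {A A' : Mat d n} (h : WH c ε κ A) (h' : WH c ε κ' A') :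
    WH c ε (κ + κ') (A * A') := by
  intro s j
  rw [Matrix.mul_apply, ← mem_weightedHomogeneousSubmodule ℂ]
  refine Submodule.sum_mem _ fun t _ => ?_
  rw [mem_weightedHomogeneousSubmodule ℂ]
  have h3 := (h s t).mul (h' t j)
  rwa [show ε t - ε s + κ + (ε j - ε t + κ') = ε j - ε s + (κ + κ') by ring] at h3

lemma WH.Xsmul {κ : ℚ} {A : Mat d n} (m : Fin d) (h : WH c ε κ A) :
    WH c ε (κ + c m) ((X m : Poly d) • A) := by
  intro s j
  rw [Matrix.smul_apply, smul_eq_mul]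
  have h3 := (isWeightedHomogeneous_X ℂ c m).mul (h s j)
  rwa [show c m + (ε j - ε s + κ) = ε j - ε s + (κ + c m) by ring] at h3

lemma WH_HCm_B (hhom : ∀ m s j, IsWeightedHomogeneous c (B m s j) (ε j - ε s - c m))
    (m : Fin d) (t : ℕ) : WH c ε (-(c m)) (HCm t (B m)) := by
  intro s j
  have h := HC_isWeightedHomogeneous (hhom m s j) t
  rwa [show ε j - ε s - c m = ε j - ε s + -(c m) by ring] at h

variable (hhom : ∀ m s j, IsWeightedHomogeneous c (B m s j) (ε j - ε s - c m))
include hhom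

lemma WH_G_of (r : ℕ) (m : Fin d) (hIH : ∀ p, p ≤ r → WH c ε 0 (Phi B p)) :
    WH c ε (-(c m)) (G B m r) := by
  refine WH.sum fun p hp => ?_
  rw [Finset.mem_range] at hp
  have h := (hIH p (by omega)).mul (WH_HCm_B B hhom m (r - p))
  rwa [zero_add] at h

lemma WH_Phi : ∀ r, WH c ε 0 (Phi B r) := by
  intro r
  induction r using Nat.strong_induction_on with
  | _ r IH =>
    match r with
    | 0 => rw [Phi_zero]; exact WH_one
    | (r + 1) =>
      rw [Phi_succ]
      refine WH.csmul _ (WH.sum fun m _ => ?_)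
      have h := WH.Xsmul m (WH_G_of B hhom r m fun p hp => IH p (by omega))
      rwa [neg_add_cancel] at h

lemma exists_R (hc : ∀ m, 0 < c m) :
    ∃ R : ℕ, ∀ r, R ≤ r → Phi B r = 0 ∧ ∀ m, G B m r = 0 := by
  obtain ⟨q, hq0, hqc⟩ : ∃ q : ℚ, 0 < q ∧ ∀ m, q ≤ c m := by
    rcases isEmpty_or_nonempty (Fin d) with h | h
    · exact ⟨1, one_pos, fun m => (h.false m).elim⟩
    · refine ⟨Finset.univ.inf' Finset.univ_nonempty c, ?_, fun m =>
        Finset.inf'_le c (Finset.mem_univ m)⟩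
      rw [Finset.lt_inf'_iff]
      exact fun m _ => hc m
  set Eb : ℚ := (∑ t, |ε t|) + (∑ t, |ε t|) with hEbdef
  have hEb : ∀ s j : Fin n, ε j - ε s ≤ Eb := by
    intro s j
    have h1 : ε j ≤ ∑ t, |ε t| :=
      le_trans (le_abs_self _) (Finset.single_le_sum (fun t _ => abs_nonneg (ε t))
        (Finset.mem_univ j))
    have h2 : -ε s ≤ ∑ t, |ε t| :=
      le_trans (neg_le_abs _) (Finset.single_le_sum (fun t _ => abs_nonneg (ε t))
        (Finset.mem_univ s))
    rw [hEbdef]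
    linarith
  obtain ⟨R, hR⟩ := exists_nat_gt (Eb / q)
  have key : ∀ r : ℕ, R ≤ r → ∀ (κ : ℚ), κ ≤ 0 → ∀ M : Mat d n,
      MHom r M → WH c ε κ M → M = 0 := by
    intro r hr κ hκ M h1 h2
    refine Matrix.ext fun s j => ?_
    rw [Matrix.zero_apply]
    refine vanish q hqc (h1 s j) (h2 s j) ?_
    have hrq : Eb < (r : ℚ) * q := by
      rw [div_lt_iff₀ hq0] at hR
      calc Eb < (R : ℚ) * q := hR
        _ ≤ (r : ℚ) * q := by
          apply mul_le_mul_of_nonneg_right _ hq0.le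
          exact_mod_cast hr
    have := hEb s j
    linarith
  refine ⟨R, fun r hr => ?_⟩
  constructor
  · exact key r hr 0 le_rfl _ (MHom_Phi B r) (WH_Phi B hhom r)
  · intro m
    exact key r hr (-(c m)) (by linarith [hc m]) _
      (MHom_G_of B r m fun p _ => MHom_Phi B p) (WH_G_of B hhom r m fun p _ => WH_Phi B hhom p)

end WH


section Main
variable (hcompat : ∀ m m' : Fin d, Dm m (B m') + B m * B m' = Dm m' (B m) + B m' * B m)
include hcompat

lemma G_deriv (r : ℕ) (IH : ∀ p, p < r → ∀ m, Dm m (Phi B (p + 1)) = G B m p) (m m' : Fin d) :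
    Dm m' (G B m r) =
      ∑ a ∈ Finset.range r, Phi B a * HCm (r - 1 - a) (B m' * B m + Dm m' (B m)) := by
  rw [G, Dm_sum]
  have step1 : ∀ p ∈ Finset.range (r + 1),
      Dm m' (Phi B p * HCm (r - p) (B m)) =
        Dm m' (Phi B p) * HCm (r - p) (B m) + Phi B p * Dm m' (HCm (r - p) (B m)) :=
    fun p _ => Dm_mul m' _ _
  rw [Finset.sum_congr rfl step1, Finset.sum_add_distrib]
  have hA1 : ∑ p ∈ Finset.range (r + 1), Dm m' (Phi B p) * HCm (r - p) (B m)
      = ∑ a ∈ Finset.range r, Phi B a * HCm (r - 1 - a) (B m' * B m) := by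
    rw [Finset.sum_range_succ']
    rw [Phi_zero, Dm_one, zero_mul, add_zero]
    have e1 : ∀ i ∈ Finset.range r, Dm m' (Phi B (i + 1)) * HCm (r - (i + 1)) (B m)
        = ∑ a ∈ Finset.range (i + 1),
            Phi B a * (HCm (i - a) (B m') * HCm ((r - 1 - a) - (i - a)) (B m)) := by
      intro i hi
      rw [Finset.mem_range] at hi
      rw [IH i hi m', G, Finset.sum_mul]
      refine Finset.sum_congr rfl fun a ha => ?_
      rw [Finset.mem_range] at ha
      rw [mul_assoc]
      have : r - (i + 1) = (r - 1 - a) - (i - a) := by omega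
      rw [this]
    rw [Finset.sum_congr rfl e1,
      tri (fun a b => Phi B a * (HCm b (B m') * HCm ((r - 1 - a) - b) (B m))) r]
    refine Finset.sum_congr rfl fun a ha => ?_
    rw [Finset.mem_range] at ha
    rw [← Finset.mul_sum]
    congr 1
    rw [show r - a = (r - 1 - a) + 1 by omega, HCm_mul]
  have hA2 : ∑ p ∈ Finset.range (r + 1), Phi B p * Dm m' (HCm (r - p) (B m))
      = ∑ a ∈ Finset.range r, Phi B a * HCm (r - 1 - a) (Dm m' (B m)) := by
    rw [Finset.sum_range_succ, Nat.sub_self, Dm_HCm_zero, mul_zero, add_zero]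
    refine Finset.sum_congr rfl fun p hp => ?_
    rw [Finset.mem_range] at hp
    rw [show r - p = (r - 1 - p) + 1 by omega, Dm_HCm_succ]
  rw [hA1, hA2, ← Finset.sum_add_distrib]
  refine Finset.sum_congr rfl fun a _ => ?_
  rw [HCm_add, mul_add]

lemma Dm_Phi : ∀ r m, Dm m (Phi B (r + 1)) = G B m r := by
  intro r
  induction r using Nat.strong_induction_on with
  | _ r IH =>
  intro m
  have hIH : ∀ p, p < r → ∀ m'', Dm m'' (Phi B (p + 1)) = G B m'' p :=
    fun p hp => IH p hp
  have hswap : ∀ m₁ m₂ : Fin d, Dm m₂ (G B m₁ r) = Dm m₁ (G B m₂ r) := by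
    intro m₁ m₂
    rw [G_deriv B hcompat r hIH m₁ m₂, G_deriv B hcompat r hIH m₂ m₁]
    refine Finset.sum_congr rfl fun a _ => ?_
    have hX : B m₂ * B m₁ + Dm m₂ (B m₁) = B m₁ * B m₂ + Dm m₁ (B m₂) := by
      have h := hcompat m₂ m₁
      calc B m₂ * B m₁ + Dm m₂ (B m₁) = Dm m₂ (B m₁) + B m₂ * B m₁ := add_comm _ _
        _ = Dm m₁ (B m₂) + B m₁ * B m₂ := h
        _ = B m₁ * B m₂ + Dm m₁ (B m₂) := add_comm _ _
    rw [hX]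
  have hhom1 : MHom (r + 1) (Phi B (r + 1)) := MHom_Phi B (r + 1)
  have hGhom : ∀ m₁, MHom r (G B m₁ r) := fun m₁ => MHom_G_of B r m₁ fun p _ => MHom_Phi B p
  have hcast : ((r : ℂ) + 1) ≠ 0 := Nat.cast_add_one_ne_zero r
  have hsum : ∑ m₁ : Fin d, (X m₁ : Poly d) • G B m₁ r = ((r : ℂ) + 1) • Phi B (r + 1) := by
    rw [Phi_succ, smul_smul, mul_inv_cancel₀ hcast, one_smul]
  set H : Fin d → Mat d n := fun m₁ => Dm m₁ (Phi B (r + 1)) - G B m₁ r with hHdef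
  have hHhom : ∀ m₁, MHom r (H m₁) := fun m₁ => (hhom1.Dm m₁).sub (hGhom m₁)
  have hHsum : ∑ m₁, (X m₁ : Poly d) • H m₁ = 0 := by
    simp only [hHdef, smul_sub]
    rw [Finset.sum_sub_distrib, meuler hhom1, hsum, sub_eq_zero]
    congr 1
    push_cast
    ring
  have hHcurl : ∀ m₁ m₂, Dm m₂ (H m₁) = Dm m₁ (H m₂) := by
    intro m₁ m₂
    simp only [hHdef]
    rw [Dm_sub, Dm_sub, Dm_comm, hswap m₁ m₂]
  have final : ((r : ℂ) + 1) • H m = 0 := by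
    have e1 : ∑ m₂, (X m₂ : Poly d) • Dm m₂ (H m) = (r : ℂ) • H m := meuler (hHhom m)
    have e2 : ∑ m₂, (X m₂ : Poly d) • Dm m₂ (H m) = -H m := by
      have e3 : ∀ m₂, (X m₂ : Poly d) • Dm m₂ (H m)
          = Dm m ((X m₂ : Poly d) • H m₂) - (pderiv m (X m₂ : Poly d)) • H m₂ := by
        intro m₂
        rw [hHcurl m m₂, Dm_Xsmul m m₂ (H m₂)]
        abel
      rw [Finset.sum_congr rfl fun m₂ _ => e3 m₂, Finset.sum_sub_distrib, ← Dm_sum,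
        hHsum, Dm_zero, zero_sub, neg_inj]
      rw [Finset.sum_eq_single m]
      · rw [pderiv_X_self, one_smul]
      · intro m₂ _ hne
        rw [pderiv_X_of_ne hne, zero_smul]
      · intro habs
        exact absurd (Finset.mem_univ m) habs
    have e4 : (r : ℂ) • H m = -H m := e1.symm.trans e2
    rw [add_smul, one_smul, e4, neg_add_cancel]
  have h0 : H m = 0 := by
    rcases smul_eq_zero.mp final with h | h
    · exact absurd h hcast
    · exact h
  have h1 : Dm m (Phi B (r + 1)) - G B m r = 0 := h0
  exact sub_eq_zero.mp h1

end Main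


section Assemble

lemma HC_sum_total {p : Poly d} {T : ℕ} (h : p.totalDegree < T) :
    ∑ r ∈ Finset.range T, homogeneousComponent r p = p := by
  conv_rhs => rw [← sum_homogeneousComponent p]
  exact (Finset.sum_subset
    (by intro x hx; rw [Finset.mem_range] at *; omega)
    (fun i _ hi => homogeneousComponent_eq_zero _ p
      (by rw [Finset.mem_range] at hi; omega))).symm

lemma HCm_sum_total (M : Mat d n) (T : ℕ) (hT : ∀ s j, (M s j).totalDegree < T) :
    ∑ r ∈ Finset.range T, HCm r M = M := by
  refine Matrix.ext fun s j => ?_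
  rw [Matrix.sum_apply]
  exact HC_sum_total (hT s j)

lemma zero_of_system (B : Fin d → Mat d n) (M : Mat d n)
    (hM : ∀ m, Dm m M = M * B m) (h0 : HCm 0 M = 0) : M = 0 := by
  have key : ∀ r, HCm r M = 0 := by
    intro r
    induction r using Nat.strong_induction_on with
    | _ r IH =>
    match r with
    | 0 => exact h0
    | (r + 1) =>
      have h3 : ∀ m, HCm r (M * B m) = 0 := by
        intro m
        rw [HCm_mul]
        refine Finset.sum_eq_zero fun i hi => ?_
        rw [Finset.mem_range] at hi
        rw [IH i (by omega), zero_mul]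
      have h1 := meuler (MHom.HCm (r + 1) M)
      have h2 : ∑ m, (X m : Poly d) • Dm m (HCm (r + 1) M) = 0 :=
        Finset.sum_eq_zero fun m _ => by rw [Dm_HCm_succ, hM m, h3 m, smul_zero]
      have h4 : ((r + 1 : ℕ) : ℂ) • HCm (r + 1) M = 0 := by rw [← h1, h2]
      rcases smul_eq_zero.mp h4 with h | h
      · exact absurd h (by exact_mod_cast Nat.succ_ne_zero r)
      · exact h
  rw [← HCm_sum_total M
    ((Finset.univ.sup fun s => Finset.univ.sup fun j => (M s j).totalDegree) + 1)
    (fun s j => Nat.lt_succ_of_le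
      (le_trans (Finset.le_sup (f := fun j => (M s j).totalDegree) (Finset.mem_univ j))
        (Finset.le_sup (f := fun s => Finset.univ.sup fun j => (M s j).totalDegree)
          (Finset.mem_univ s))))]
  exact Finset.sum_eq_zero fun r _ => key r

variable (B : Fin d → Mat d n) (c : Fin d → ℚ) (ε : Fin n → ℚ)

lemma exists_sol (hc : ∀ m, 0 < c m)
    (hhom : ∀ m s j, IsWeightedHomogeneous c (B m s j) (ε j - ε s - c m))
    (hcompat : ∀ m m' : Fin d, Dm m (B m') + B m * B m' = Dm m' (B m) + B m' * B m) :
    ∃ Ψ : Mat d n, (∀ m, Dm m Ψ = Ψ * B m) ∧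
      Matrix.of (fun s j => constantCoeff (Ψ s j)) = (1 : Matrix (Fin n) (Fin n) ℂ) := by
  obtain ⟨R, hR⟩ := exists_R B hhom hc
  set Qb : ℕ := Finset.univ.sup fun m : Fin d => Finset.univ.sup fun s : Fin n =>
    Finset.univ.sup fun j : Fin n => (B m s j).totalDegree with hQb
  set T' : ℕ := R + Qb + 1 with hT'
  refine ⟨∑ p ∈ Finset.range (T' + 1), Phi B p, fun m => ?_, ?_⟩
  · rw [Dm_sum, Finset.sum_range_succ', Phi_zero, Dm_one, add_zero,
      Finset.sum_congr rfl (fun i _ => Dm_Phi B hcompat i m)]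
    have lhs_eq : ∑ i ∈ Finset.range T', G B m i
        = ∑ p ∈ Finset.range T', Phi B p * B m := by
      simp only [G]
      rw [tri (fun p b => Phi B p * HCm b (B m)) T']
      refine Finset.sum_congr rfl fun p hp => ?_
      rw [Finset.mem_range] at hp
      rw [← Finset.mul_sum]
      rcases le_or_gt R p with h | h
      · rw [(hR p h).1, zero_mul, zero_mul]
      · congr 1
        apply HCm_sum_total
        intro s j
        have hb1 := Finset.le_sup (f := fun j => (B m s j).totalDegree) (Finset.mem_univ j)
        have hb2 := Finset.le_sup
          (f := fun s => Finset.univ.sup fun j => (B m s j).totalDegree) (Finset.mem_univ s)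
        have hb3 := Finset.le_sup
          (f := fun m : Fin d => Finset.univ.sup fun s : Fin n =>
            Finset.univ.sup fun j : Fin n => (B m s j).totalDegree) (Finset.mem_univ m)
        have : (B m s j).totalDegree ≤ Qb := le_trans hb1 (le_trans hb2 hb3)
        omega
    rw [lhs_eq, Finset.sum_mul]
    rw [Finset.sum_range_succ (fun p => Phi B p * B m) T']
    rw [(hR T' (by omega)).1, zero_mul, add_zero]
  · refine Matrix.ext fun s j => ?_
    show constantCoeff ((∑ p ∈ Finset.range (T' + 1), Phi B p) s j) = _
    rw [Matrix.sum_apply, map_sum, Finset.sum_eq_single 0]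
    · rw [Phi_zero]
      rw [Matrix.one_apply, Matrix.one_apply]
      split <;> simp
    · intro p hp hne
      match p, hne with
      | (q + 1), _ =>
        have hh := MHom_Phi B (q + 1) s j
        exact hh.coeff_eq_zero (by simp)
    · intro h
      exact absurd (Finset.mem_range.2 (by omega)) h

/-- the weighted Euler operator -/
noncomputable def Ew (c : Fin d → ℚ) (p : Poly d) : Poly d :=
  ∑ m : Fin d, (c m : ℂ) • (X m * pderiv m p)

lemma Ew_mul (p q : Poly d) : Ew c (p * q) = Ew c p * q + p * Ew c q := by
  unfold Ew
  conv_rhs => rw [Finset.sum_mul, Finset.mul_sum]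
  rw [← Finset.sum_add_distrib]
  refine Finset.sum_congr rfl fun m _ => ?_
  rw [pderiv_mul, mul_add, smul_add]
  congr 1
  · rw [smul_mul_assoc, mul_assoc]
  · rw [mul_smul_comm, mul_left_comm]

lemma Ew_sum {ι : Type*} (s : Finset ι) (f : ι → Poly d) :
    Ew c (∑ i ∈ s, f i) = ∑ i ∈ s, Ew c (f i) := by
  unfold Ew
  simp only [map_sum, Finset.mul_sum, Finset.smul_sum]
  rw [Finset.sum_comm]

lemma pderiv_Ew (m : Fin d) (p : Poly d) :
    pderiv m (Ew c p) = Ew c (pderiv m p) + (c m : ℂ) • pderiv m p := by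
  unfold Ew
  rw [map_sum]
  have e : ∀ m' : Fin d, pderiv m ((c m' : ℂ) • (X m' * pderiv m' p))
      = (c m' : ℂ) • (pderiv m (X m' : Poly d) * pderiv m' p)
        + (c m' : ℂ) • (X m' * pderiv m' (pderiv m p)) := by
    intro m'
    rw [(pderiv m).map_smul, pderiv_mul, pderiv_comm' m m' p, smul_add]
  rw [Finset.sum_congr rfl fun m' _ => e m', Finset.sum_add_distrib, add_comm]
  congr 1
  rw [Finset.sum_eq_single m]
  · rw [pderiv_X_self, one_mul]
  · intro m₂ _ hne
    rw [pderiv_X_of_ne hne, zero_mul, smul_zero]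
  · intro h
    exact absurd (Finset.mem_univ m) h

lemma part2 (hhom : ∀ m s j, IsWeightedHomogeneous c (B m s j) (ε j - ε s - c m))
    (Ψ : Mat d n) (hd' : ∀ m, Dm m Ψ = Ψ * B m)
    (h0 : Matrix.of (fun s j => constantCoeff (Ψ s j)) = (1 : Matrix (Fin n) (Fin n) ℂ)) :
    ∀ s j, IsWeightedHomogeneous c (Ψ s j) (ε j - ε s) := by
  set N : Mat d n :=
    Matrix.of (fun s j => Ew c (Ψ s j) - ((ε j - ε s : ℚ) : ℂ) • Ψ s j) with hNdef
  have hNapp : ∀ s j, N s j = Ew c (Ψ s j) - ((ε j - ε s : ℚ) : ℂ) • Ψ s j := fun s j => rfl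
  have hc0 : ∀ s j, constantCoeff (Ψ s j) = (1 : Matrix (Fin n) (Fin n) ℂ) s j :=
    fun s j => congrFun (congrFun h0 s) j
  have hN0 : HCm 0 N = 0 := by
    refine Matrix.ext fun s j => ?_
    show homogeneousComponent 0 (N s j) = (0 : Mat d n) s j
    rw [Matrix.zero_apply, homogeneousComponent_zero, hNapp]
    have e1 : coeff 0 (Ew c (Ψ s j)) = 0 := by
      rw [show Ew c (Ψ s j) = ∑ m : Fin d, (c m : ℂ) • (X m * pderiv m (Ψ s j)) from rfl,
        coeff_wEuler]
      simp
    rw [coeff_sub, e1, coeff_smul, zero_sub]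
    have e2 : coeff 0 (Ψ s j) = constantCoeff (Ψ s j) := rfl
    rw [e2, hc0]
    rcases eq_or_ne s j with rfl | hne
    · rw [Matrix.one_apply_eq]
      simp
    · rw [Matrix.one_apply_ne hne]
      simp
  have hNsys : ∀ m, Dm m N = N * B m := by
    intro m
    refine Matrix.ext fun s j => ?_
    show pderiv m (N s j) = (N * B m) s j
    have hdm : pderiv m (Ψ s j) = (Ψ * B m) s j := congrFun (congrFun (hd' m) s) j
    have e3 : ∀ t, Ψ s t * Ew c (B m t j) = ((ε j - ε t - c m : ℚ) : ℂ) • (Ψ s t * B m t j) := by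
      intro t
      have hB := (isWeightedHomogeneous_iff_wEuler c (ε j - ε t - c m) (B m t j)).1 (hhom m t j)
      rw [show Ew c (B m t j) = ((ε j - ε t - c m : ℚ) : ℂ) • B m t j from hB, mul_smul_comm]
    rw [hNapp, map_sub, pderiv_Ew, (pderiv m).map_smul, hdm, Matrix.mul_apply, Matrix.mul_apply]
    rw [Ew_sum, Finset.smul_sum, Finset.smul_sum]
    simp only [Ew_mul, hNapp, sub_mul]
    simp only [e3]
    rw [← Finset.sum_add_distrib, ← Finset.sum_sub_distrib]
    refine Finset.sum_congr rfl fun t _ => ?_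
    rw [smul_mul_assoc]
    push_cast
    module
  have hNzero : N = 0 := zero_of_system B N hNsys hN0
  intro s j
  have hersatz : N s j = (0 : Mat d n) s j := congrFun (congrFun hNzero s) j
  rw [hNapp, Matrix.zero_apply] at hersatz
  refine (isWeightedHomogeneous_iff_wEuler c (ε j - ε s) (Ψ s j)).2 ?_
  show Ew c (Ψ s j) = _
  rw [sub_eq_zero.mp hersatz]

end Assemble

end Stmt17

open Stmt17 in
theorem stmt17 (d n : ℕ) (c : Fin d → ℚ) (hc : ∀ m, 0 < c m) (ε : Fin n → ℚ)
    (B : Fin d → Matrix (Fin n) (Fin n) (MvPolynomial (Fin d) ℂ))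
    (hhom : ∀ m s j, IsWeightedHomogeneous c (B m s j) (ε j - ε s - c m))
    (hcompat : ∀ m m' : Fin d,
      Matrix.of (fun s j => pderiv m (B m' s j)) + B m * B m'
        = Matrix.of (fun s j => pderiv m' (B m s j)) + B m' * B m) :
    (∃! Ψ : Matrix (Fin n) (Fin n) (MvPolynomial (Fin d) ℂ),
      (∀ m, Matrix.of (fun s j => pderiv m (Ψ s j)) = Ψ * B m) ∧
      Matrix.of (fun s j => constantCoeff (Ψ s j)) = (1 : Matrix (Fin n) (Fin n) ℂ)) ∧
    (∀ Ψ : Matrix (Fin n) (Fin n) (MvPolynomial (Fin d) ℂ),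
      ((∀ m, Matrix.of (fun s j => pderiv m (Ψ s j)) = Ψ * B m) ∧
        Matrix.of (fun s j => constantCoeff (Ψ s j)) = (1 : Matrix (Fin n) (Fin n) ℂ)) →
      ∀ s j, IsWeightedHomogeneous c (Ψ s j) (ε j - ε s)) := by
  have hcompat' : ∀ m m' : Fin d, Dm m (B m') + B m * B m' = Dm m' (B m) + B m' * B m :=
    fun m m' => hcompat m m'
  obtain ⟨Ψ, hΨd, hΨ0⟩ := exists_sol B c ε hc hhom hcompat'
  constructor
  · refine ⟨Ψ, ⟨fun m => hΨd m, hΨ0⟩, ?_⟩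
    rintro Ψ' ⟨h'd, h'0⟩
    have hsub : ∀ m, Dm m (Ψ' - Ψ) = (Ψ' - Ψ) * B m := by
      intro m
      have h1 : Dm m Ψ' = Ψ' * B m := h'd m
      rw [Dm_sub, h1, hΨd m, sub_mul]
    have h00 : HCm 0 (Ψ' - Ψ) = 0 := by
      refine Matrix.ext fun s j => ?_
      show homogeneousComponent 0 ((Ψ' - Ψ) s j) = (0 : Mat d n) s j
      have hc1 : constantCoeff (Ψ' s j) = (1 : Matrix (Fin n) (Fin n) ℂ) s j :=
        congrFun (congrFun h'0 s) j
      have hc2 : constantCoeff (Ψ s j) = (1 : Matrix (Fin n) (Fin n) ℂ) s j :=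
        congrFun (congrFun hΨ0 s) j
      rw [Matrix.sub_apply, map_sub, homogeneousComponent_zero, homogeneousComponent_zero,
        Matrix.zero_apply]
      rw [show coeff 0 (Ψ' s j) = constantCoeff (Ψ' s j) from rfl,
        show coeff 0 (Ψ s j) = constantCoeff (Ψ s j) from rfl, hc1, hc2, sub_self]
    have := zero_of_system B (Ψ' - Ψ) hsub h00
    exact sub_eq_zero.mp this
  · rintro Ψ'' ⟨h1, h2⟩
    exact part2 B c ε hhom Ψ'' (fun m => h1 m) h2
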